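/- Let X = {x_1,...,x_n} ⊂ ℝ² with centroid M. If s ∈ ℝ² can be written as s = Σ_j τ_j x_j with weights τ_j ≥ 1/(n+1) and Σ_j τ_j = 1, then s lies in the convex hull of the 2-centroids {M_1,...,M_n}, where M_j = (1/(n+1))(x_j + Σ_i x_i). -/

import Mathlib

/-- If `s = Σ τ_j x_j` with affine weights `τ_j ≥ 1/(n+1)`, then `s` lies in the convex hull
of the 2-centroids. -/
theorem weights_ge_implies_mem_convexHull_two_centroids
    {n : ℕ} [NeZero n] (x : Fin n → EuclideanSpace ℝ (Fin 2))
    (Mc : Fin n → EuclideanSpace ℝ (Fin 2))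
    (hMc : ∀ j, Mc j = ((n : ℝ) + 1)⁻¹ • (x j + ∑ i, x i))
    (τ : Fin n → ℝ) (hτ : ∀ j, 1 / ((n : ℝ) + 1) ≤ τ j) (hsum : ∑ j, τ j = 1)
    (s : EuclideanSpace ℝ (Fin 2)) (hseq : s = ∑ j, τ j • x j) :
    s ∈ convexHull ℝ (Set.range Mc) := by
  have hn1 : (0:ℝ) < (n:ℝ) + 1 := by positivity
  set σ : Fin n → ℝ := fun j => ((n:ℝ) + 1) * τ j - 1 with hσ
  have hσ0 : ∀ j ∈ Finset.univ, 0 ≤ σ j := by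
    intro j _
    have := hτ j
    rw [div_le_iff₀ hn1] at this
    simp [hσ]
    nlinarith
  have hσsum : ∑ j : Fin n, σ j = 1 := by
    simp only [hσ, Finset.sum_sub_distrib, ← Finset.mul_sum, hsum,
      Finset.sum_const, Finset.card_univ, Fintype.card_fin, nsmul_eq_mul, mul_one]
    ring
  have key : s = ∑ j : Fin n, σ j • Mc j := by
    have hMc' : ∀ j, σ j • Mc j = (τ j - ((n:ℝ)+1)⁻¹) • (x j + ∑ i, x i) := by
      intro j
      rw [hMc j, smul_smul]
      congr 1
      field_simp [hσ]
      ring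
    have hc : ∑ j : Fin n, (τ j - ((n:ℝ)+1)⁻¹) = ((n:ℝ)+1)⁻¹ := by
      rw [Finset.sum_sub_distrib, hsum]
      simp only [Finset.sum_const, Finset.card_univ, Fintype.card_fin, nsmul_eq_mul]
      field_simp
      ring
    have h1 : ∑ j : Fin n, σ j • Mc j
        = (∑ j : Fin n, (τ j - ((n:ℝ)+1)⁻¹) • x j)
          + (∑ j : Fin n, (τ j - ((n:ℝ)+1)⁻¹)) • (∑ i, x i) := by
      simp only [hMc', smul_add, Finset.sum_add_distrib, Finset.sum_smul]
    rw [hseq, h1, hc]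
    simp only [sub_smul, Finset.sum_sub_distrib, ← Finset.smul_sum]
    abel
  rw [key]
  have := Finset.centerMass_mem_convexHull (Finset.univ : Finset (Fin n)) hσ0
    (by rw [hσsum]; norm_num) (fun i _ => (Set.mem_range_self i : Mc i ∈ Set.range Mc))
  rwa [Finset.centerMass_eq_of_sum_1 _ _ hσsum] at this
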